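/- Let V and M be real Hilbert spaces, a : V × V → ℝ and b : V × M → ℝ bounded bilinear forms. Suppose a is coercive on the kernel K = {v ∈ V : b(v,τ) = 0 ∀τ ∈ M} with constant α > 0, and b satisfies the inf-sup condition with constant β > 0. Then for every g ∈ M there exists a unique pair (u, σ) ∈ V × M such that a(u,v) − b(v,σ) = 0 for all v ∈ V and −b(u,τ) = −⟨g,τ⟩ for all τ ∈ M; moreover ‖u‖_V + ‖σ‖_M ≤ C‖g‖_M with C depending only on α, β and the continuity constants. -/

import Mathlib

open scoped RealInnerProductSpace

noncomputable def rieszFlip {V M : Type*} [NormedAddCommGroup V] [InnerProductSpace ℝ V]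
    [CompleteSpace V] [NormedAddCommGroup M] [InnerProductSpace ℝ M]
    (b : V →L[ℝ] M →L[ℝ] ℝ) : M →L[ℝ] V :=
  LinearMap.mkContinuous
    { toFun := fun τ => (InnerProductSpace.toDual ℝ V).symm (b.flip τ)
      map_add' := fun x y => by simp
      map_smul' := fun c x => by simp }
    ‖b.flip‖ (fun τ => by
      simp only [LinearMap.coe_mk, AddHom.coe_mk]
      rw [LinearIsometryEquiv.norm_map]
      exact (b.flip).le_opNorm τ)

lemma inner_rieszFlip {V M : Type*} [NormedAddCommGroup V] [InnerProductSpace ℝ V]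
    [CompleteSpace V] [NormedAddCommGroup M] [InnerProductSpace ℝ M]
    (b : V →L[ℝ] M →L[ℝ] ℝ) (τ : M) (v : V) : ⟪rieszFlip b τ, v⟫ = b v τ :=
  InnerProductSpace.toDual_symm_apply

section main

variable {V M : Type*} [NormedAddCommGroup V] [InnerProductSpace ℝ V] [CompleteSpace V]
    [NormedAddCommGroup M] [InnerProductSpace ℝ M] [CompleteSpace M]

-- Step 1 : lower bound for rieszFlip from inf-sup
lemma rieszFlip_lower (b : V →L[ℝ] M →L[ℝ] ℝ) (β : ℝ)
    (hinfsup : ∀ τ : M, β * ‖τ‖ ≤ ⨆ v : {v : V // v ≠ 0}, b v τ / ‖(v : V)‖) (τ : M) :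
    β * ‖τ‖ ≤ ‖rieszFlip b τ‖ := by
  refine (hinfsup τ).trans (Real.iSup_le ?_ (norm_nonneg _))
  rintro ⟨v, hv⟩
  have hv' : (0:ℝ) < ‖v‖ := norm_pos_iff.mpr hv
  rw [div_le_iff₀ hv']
  calc b v τ = ⟪rieszFlip b τ, v⟫ := (inner_rieszFlip b τ v).symm
    _ ≤ ‖rieszFlip b τ‖ * ‖v‖ := real_inner_le_norm _ _

-- Step: kernel membership
lemma mem_ker_iff (b : V →L[ℝ] M →L[ℝ] ℝ) (v : V) :
    v ∈ LinearMap.ker (b : V →ₗ[ℝ] M →L[ℝ] ℝ) ↔ ∀ τ : M, b v τ = 0 := by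
  simp [LinearMap.mem_ker, ContinuousLinearMap.ext_iff]

-- Step: orthogonal of kernel = range of rieszFlip
lemma ker_orth_eq_range (b : V →L[ℝ] M →L[ℝ] ℝ) (β : ℝ) (hβ : 0 < β)
    (hlow : ∀ τ : M, β * ‖τ‖ ≤ ‖rieszFlip b τ‖) :
    (LinearMap.ker (b : V →ₗ[ℝ] M →L[ℝ] ℝ) : Submodule ℝ V)ᗮ = LinearMap.range (rieszFlip b : M →ₗ[ℝ] V) := by
  have hanti : AntilipschitzWith (β⁻¹).toNNReal (rieszFlip b) := by
    refine ContinuousLinearMap.antilipschitz_of_bound _ (fun τ => ?_)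
    have := hlow τ
    rw [Real.coe_toNNReal _ (le_of_lt (inv_pos.mpr hβ))]
    rw [← le_div_iff₀' hβ] at this
    simpa [div_eq_inv_mul] using this
  have hclosed : IsClosed (LinearMap.range (rieszFlip b : M →ₗ[ℝ] V) : Set V) := by
    have := hanti.isClosed_range (rieszFlip b).uniformContinuous
    convert this using 1
    ext x
    simp
  haveI : CompleteSpace (LinearMap.range (rieszFlip b : M →ₗ[ℝ] V)) := hclosed.completeSpace_coe
  have hker : (LinearMap.ker (b : V →ₗ[ℝ] M →L[ℝ] ℝ) : Submodule ℝ V) = (LinearMap.range (rieszFlip b : M →ₗ[ℝ] V))ᗮ := by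
    ext v
    rw [mem_ker_iff, Submodule.mem_orthogonal]
    constructor
    · rintro h _ ⟨τ, rfl⟩
      rw [ContinuousLinearMap.coe_coe, inner_rieszFlip]
      exact h τ
    · intro h τ
      rw [← inner_rieszFlip b τ v]
      exact h _ ⟨τ, rfl⟩
  rw [hker, Submodule.orthogonal_orthogonal]

end main

attribute [irreducible] rieszFlip

lemma div_trick {x c d : ℝ} (hx : 0 ≤ x) (hc : 0 < c) (hd : 0 ≤ d) (h : c * x * x ≤ d * x) :
    x ≤ d / c := by
  rcases hx.eq_or_lt with h0 | h0
  · rw [← h0]; positivity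
  · have hcx : c * x ≤ d := le_of_mul_le_mul_right h h0
    rw [le_div_iff₀ hc, mul_comm]
    exact hcx

set_option maxHeartbeats 1000000 in
/-- Babuška–Brezzi well-posedness of the mixed problem. If the bounded
bilinear form `a` is coercive (with constant `α > 0`) on the kernel of `b`, and `b`
satisfies the inf-sup condition with constant `β > 0`, then for every `g ∈ M` the mixed
problem `a(u,v) − b(v,σ) = 0 ∀v`, `−b(u,τ) = −⟨g,τ⟩ ∀τ` has a unique solution
`(u,σ) ∈ V × M`, and `‖u‖ + ‖σ‖ ≤ C‖g‖` with `C` depending only on `α`, `β` and the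
continuity constants. -/
theorem stmt2 {V M : Type*} [NormedAddCommGroup V] [InnerProductSpace ℝ V] [CompleteSpace V]
    [NormedAddCommGroup M] [InnerProductSpace ℝ M] [CompleteSpace M]
    (a : V →L[ℝ] V →L[ℝ] ℝ) (b : V →L[ℝ] M →L[ℝ] ℝ)
    (hsym : ∀ u v : V, a u v = a v u)
    (α : ℝ) (hα : 0 < α)
    (hcoer : ∀ v : V, (∀ τ : M, b v τ = 0) → α * ‖v‖ ^ 2 ≤ a v v)
    (β : ℝ) (hβ : 0 < β)
    (hinfsup : ∀ τ : M, β * ‖τ‖ ≤ ⨆ v : {v : V // v ≠ 0}, b v τ / ‖(v : V)‖) :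
    ∃ C > 0, ∀ g : M,
      (∃! p : V × M,
        (∀ v : V, a p.1 v - b v p.2 = 0) ∧ (∀ τ : M, -(b p.1 τ) = -⟪g, τ⟫)) ∧
      (∀ p : V × M,
        ((∀ v : V, a p.1 v - b v p.2 = 0) ∧ (∀ τ : M, -(b p.1 τ) = -⟪g, τ⟫)) →
        ‖p.1‖ + ‖p.2‖ ≤ C * ‖g‖) := by
  have hlow : ∀ τ : M, β * ‖τ‖ ≤ ‖rieszFlip b τ‖ := rieszFlip_lower b β hinfsup
  have horth : (LinearMap.ker (b : V →ₗ[ℝ] M →L[ℝ] ℝ) : Submodule ℝ V)ᗮ = LinearMap.range (rieszFlip b : M →ₗ[ℝ] V) :=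
    ker_orth_eq_range b β hβ hlow
  -- vanishing of `b · δ` forces `δ = 0`
  have hM0 : ∀ δ : M, (∀ v : V, b v δ = 0) → δ = 0 := by
    intro δ h
    have hBt : rieszFlip b δ = 0 := by
      have h0 : ⟪rieszFlip b δ, rieszFlip b δ⟫ = 0 := by rw [inner_rieszFlip]; exact h _
      exact inner_self_eq_zero.mp h0
    have h1 := hlow δ
    rw [hBt, norm_zero] at h1
    have : ‖δ‖ ≤ 0 := by nlinarith [norm_nonneg δ]
    simpa using le_antisymm this (norm_nonneg δ)
  -- coercive bilinear form on M for surjectivity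
  have cs : IsCoercive (b.comp (rieszFlip b)) := by
    refine ⟨β * β, by positivity, fun τ => ?_⟩
    have h1 : b (rieszFlip b τ) τ = ‖rieszFlip b τ‖ ^ 2 := by
      rw [← inner_rieszFlip, real_inner_self_eq_norm_sq]
    have := hlow τ
    have h2 : (β * ‖τ‖) ^ 2 ≤ ‖rieszFlip b τ‖ ^ 2 := by
      have hb0 : 0 ≤ β * ‖τ‖ := by positivity
      exact pow_le_pow_left₀ hb0 this 2
    calc β * β * ‖τ‖ * ‖τ‖ = (β * ‖τ‖) ^ 2 := by ring
      _ ≤ ‖rieszFlip b τ‖ ^ 2 := h2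
      _ = b (rieszFlip b τ) τ := h1.symm
      _ = (b.comp (rieszFlip b)) τ τ := rfl
  -- surjectivity: mixed second equation solvable within range of rieszFlip
  have hsurj : ∀ g : M, ∃ w : M, ∀ τ : M, b (rieszFlip b w) τ = ⟪g, τ⟫ := by
    intro g
    refine ⟨cs.continuousLinearEquivOfBilin.symm g, fun τ => ?_⟩
    have h1 := cs.continuousLinearEquivOfBilin_apply (cs.continuousLinearEquivOfBilin.symm g) τ
    rw [cs.continuousLinearEquivOfBilin.apply_symm_apply] at h1
    exact h1.symm.trans (by rfl)
  -- coercive form on the kernel K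
  have memK : ∀ v : V, v ∈ LinearMap.ker (b : V →ₗ[ℝ] M →L[ℝ] ℝ) ↔ ∀ τ : M, b v τ = 0 := mem_ker_iff b
  set K : Submodule ℝ V := LinearMap.ker (b : V →ₗ[ℝ] M →L[ℝ] ℝ) with hKdef
  haveI : CompleteSpace K := (ContinuousLinearMap.isClosed_ker b).completeSpace_coe
  set aK : K →L[ℝ] K →L[ℝ] ℝ := a.bilinearComp K.subtypeL K.subtypeL with haKdef
  have cK : IsCoercive aK := by
    refine ⟨α, hα, fun u => ?_⟩
    have hu : ∀ τ : M, b (u : V) τ = 0 := (memK _).mp u.2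
    have := hcoer (u : V) hu
    calc α * ‖u‖ * ‖u‖ = α * ‖(u : V)‖ ^ 2 := by rw [Submodule.coe_norm]; ring
      _ ≤ a (u : V) (u : V) := this
      _ = aK u u := rfl
  -- norm bound constants
  set A : ℝ := ‖a‖ with hAdef
  have hA0 : 0 ≤ A := by rw [hAdef]; exact norm_nonneg a
  refine ⟨(1 + A / β) * ((1 + A / α) / β), by positivity, fun g => ?_⟩
  -- stability estimate for any solution
  have stab : ∀ p : V × M,
      ((∀ v : V, a p.1 v - b v p.2 = 0) ∧ (∀ τ : M, -(b p.1 τ) = -⟪g, τ⟫)) →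
      ‖p.1‖ + ‖p.2‖ ≤ (1 + A / β) * ((1 + A / α) / β) * ‖g‖ := by
    rintro ⟨u, σ⟩ ⟨h1, h2⟩
    simp only at h1 h2
    have h1' : ∀ v : V, a u v = b v σ := fun v => by have := h1 v; linarith
    have h2' : ∀ τ : M, b u τ = ⟪g, τ⟫ := fun τ => by have := h2 τ; linarith
    -- decompose u
    set uK : V := (K.orthogonalProjectionOnto u : V) with huKdef
    have huKmem : uK ∈ K := (K.orthogonalProjectionOnto u).2
    set uP : V := u - uK with huPdef
    have huPmem : uP ∈ Kᗮ := K.sub_starProjection_mem_orthogonal u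
    rw [horth] at huPmem
    obtain ⟨w, hw⟩ := huPmem
    simp only [ContinuousLinearMap.coe_coe] at hw
    have hbuK : ∀ τ : M, b uK τ = 0 := (memK _).mp huKmem
    have hbuP : ∀ τ : M, b uP τ = ⟪g, τ⟫ := by
      intro τ
      have : b uP τ = b u τ - b uK τ := by rw [huPdef]; simp
      rw [this, hbuK, h2' τ]; ring
    -- bound on uP
    have huPbound : ‖uP‖ ≤ ‖g‖ / β := by
      refine div_trick (norm_nonneg _) hβ (norm_nonneg _) ?_
      have e1 : ‖uP‖ * ‖uP‖ = ⟪rieszFlip b w, uP⟫ := by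
        rw [hw, ← real_inner_self_eq_norm_mul_norm]
      have e2 : ⟪rieszFlip b w, uP⟫ = ⟪g, w⟫ := by rw [inner_rieszFlip, hbuP]
      have e3 : ⟪g, w⟫ ≤ ‖g‖ * ‖w‖ := real_inner_le_norm _ _
      have e4 : β * ‖w‖ ≤ ‖rieszFlip b w‖ := hlow w
      rw [hw] at e4
      nlinarith [norm_nonneg g, norm_nonneg w, norm_nonneg uP]
    -- bound on uK
    have hauK : a u uK = 0 := by rw [h1' uK, hbuK]
    have huKbound : ‖uK‖ ≤ A * ‖uP‖ / α := by
      refine div_trick (norm_nonneg _) hα (by positivity) ?_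
      have e1 : a uK uK = a uK u - a uK uP := by rw [huPdef]; simp
      have e2 : a uK u = 0 := (hsym uK u).trans hauK
      have e3 : α * ‖uK‖ * ‖uK‖ ≤ a uK uK := by
        have := hcoer uK hbuK; nlinarith
      have e4 : -(a uK uP) ≤ A * ‖uK‖ * ‖uP‖ := by
        have := a.le_opNorm₂ uK uP
        have habs : |a uK uP| ≤ A * ‖uK‖ * ‖uP‖ := by
          simpa [Real.norm_eq_abs] using this
        linarith [neg_abs_le (a uK uP)]
      nlinarith
    have hu : ‖u‖ ≤ (1 + A / α) * (‖g‖ / β) := by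
      have : u = uK + uP := by rw [huPdef]; abel
      calc ‖u‖ ≤ ‖uK‖ + ‖uP‖ := by rw [this]; exact norm_add_le _ _
        _ ≤ A * ‖uP‖ / α + ‖uP‖ := by linarith
        _ = (1 + A / α) * ‖uP‖ := by ring
        _ ≤ (1 + A / α) * (‖g‖ / β) := by
            have h1p : (0:ℝ) ≤ 1 + A / α := by positivity
            exact mul_le_mul_of_nonneg_left huPbound h1p
    -- bound on σ
    have hσ : ‖σ‖ ≤ A * ‖u‖ / β := by
      refine div_trick (norm_nonneg _) hβ (by positivity) ?_
      have e1 : β * ‖σ‖ ≤ ‖rieszFlip b σ‖ := hlow σ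
      have e2 : ‖rieszFlip b σ‖ * ‖rieszFlip b σ‖ = a u (rieszFlip b σ) := by
        rw [← real_inner_self_eq_norm_mul_norm, inner_rieszFlip, h1']
      have e3 : a u (rieszFlip b σ) ≤ A * ‖u‖ * ‖rieszFlip b σ‖ := by
        have := a.le_opNorm₂ u (rieszFlip b σ)
        have habs : |a u (rieszFlip b σ)| ≤ A * ‖u‖ * ‖rieszFlip b σ‖ := by
          simpa [Real.norm_eq_abs] using this
        linarith [le_abs_self (a u (rieszFlip b σ))]
      have e5 : ‖rieszFlip b σ‖ ≤ A * ‖u‖ := by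
        by_contra hcon
        push_neg at hcon
        have hx : (0:ℝ) < ‖rieszFlip b σ‖ := lt_of_le_of_lt (by positivity) hcon
        have hmul := mul_lt_mul_of_pos_right hcon hx
        linarith
      have hfin := mul_le_mul_of_nonneg_right (e1.trans e5) (norm_nonneg σ)
      linarith [hfin]
    calc ‖u‖ + ‖σ‖ ≤ ‖u‖ + A * ‖u‖ / β := by linarith
      _ = (1 + A / β) * ‖u‖ := by ring
      _ ≤ (1 + A / β) * ((1 + A / α) * (‖g‖ / β)) := by
          have : (0:ℝ) ≤ 1 + A / β := by positivity
          exact mul_le_mul_of_nonneg_left hu this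
      _ = (1 + A / β) * ((1 + A / α) / β) * ‖g‖ := by ring
  refine ⟨?_, stab⟩
  -- existence
  obtain ⟨w, hwg⟩ := hsurj g
  set ug : V := rieszFlip b w with hugdef
  -- solve on the kernel via Lax-Milgram
  set ℓ : K →L[ℝ] ℝ := (-(a ug)).comp K.subtypeL with hldef
  set f : K := (InnerProductSpace.toDual ℝ K).symm ℓ with hfdef
  set u₀ : K := cK.continuousLinearEquivOfBilin.symm f with hu0def
  have hu₀ : ∀ v : K, a (u₀ : V) (v : V) = -(a ug (v : V)) := by
    intro v
    have h1 := cK.continuousLinearEquivOfBilin_apply u₀ v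
    rw [hu0def, cK.continuousLinearEquivOfBilin.apply_symm_apply] at h1
    have h2 : ⟪f, v⟫ = ℓ v := InnerProductSpace.toDual_symm_apply
    have h3 : aK u₀ v = a (u₀ : V) (v : V) := rfl
    rw [← h3, ← h1, h2]
    rfl
  set u : V := (u₀ : V) + ug with hudef
  have hbu0 : ∀ τ : M, b (u₀ : V) τ = 0 := (memK _).mp u₀.2
  have hbu : ∀ τ : M, b u τ = ⟪g, τ⟫ := by
    intro τ
    rw [hudef]
    simp only [map_add, ContinuousLinearMap.add_apply]
    rw [hbu0, hwg]; ring
  have haK : ∀ v : V, v ∈ K → a u v = 0 := by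
    intro v hv
    rw [hudef]
    simp only [map_add, ContinuousLinearMap.add_apply]
    have := hu₀ ⟨v, hv⟩
    simp only [Submodule.coe_mk] at this
    rw [this]; ring
  -- get σ
  have hmem : (InnerProductSpace.toDual ℝ V).symm (a u) ∈ Kᗮ := by
    rw [Submodule.mem_orthogonal]
    intro v hv
    rw [real_inner_comm]
    rw [show (inner ℝ ((InnerProductSpace.toDual ℝ V).symm (a u)) v : ℝ) = a u v from
      InnerProductSpace.toDual_symm_apply]
    exact haK v hv
  rw [horth] at hmem
  obtain ⟨σ, hσ⟩ := hmem
  simp only [ContinuousLinearMap.coe_coe] at hσ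
  have hbσ : ∀ v : V, b v σ = a u v := by
    intro v
    rw [← inner_rieszFlip, hσ]
    exact InnerProductSpace.toDual_symm_apply
  refine ⟨(u, σ), ⟨fun v => by rw [hbσ v]; ring, fun τ => by rw [hbu τ]⟩, ?_⟩
  -- uniqueness
  rintro ⟨u', σ'⟩ ⟨h1', h2'⟩
  simp only at h1' h2'
  have hbd : ∀ τ : M, b (u' - u) τ = 0 := by
    intro τ
    simp only [map_sub, ContinuousLinearMap.sub_apply]
    have e1 : b u' τ = ⟪g, τ⟫ := by have := h2' τ; linarith
    rw [e1, hbu τ]; ring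
  have hdmem : u' - u ∈ K := (memK _).mpr hbd
  have had : ∀ v : V, a (u' - u) v = b v (σ' - σ) := by
    intro v
    have e1 : a u' v = b v σ' := by have := h1' v; linarith
    have e2 : a u v = b v σ := (hbσ v).symm
    simp only [map_sub, ContinuousLinearMap.sub_apply, e1, e2]
  have hd0 : u' - u = 0 := by
    have e1 : a (u' - u) (u' - u) = b (u' - u) (σ' - σ) := had (u' - u)
    have e2 := hcoer (u' - u) hbd
    rw [e1, hbd (σ' - σ)] at e2
    have hx : ‖u' - u‖ = 0 := by
      by_contra h
      have hpos : 0 < ‖u' - u‖ := lt_of_le_of_ne (norm_nonneg _) (Ne.symm h)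
      have hpos2 : 0 < α * ‖u' - u‖ ^ 2 := by positivity
      linarith
    exact norm_eq_zero.mp hx
  have hδ0 : σ' - σ = 0 := by
    refine hM0 _ (fun v => ?_)
    have := had v
    rw [hd0] at this
    simp only [map_zero, ContinuousLinearMap.zero_apply] at this
    exact this.symm
  have : u' = u := by rwa [sub_eq_zero] at hd0
  have hσeq : σ' = σ := by rwa [sub_eq_zero] at hδ0
  simp [this, hσeq]
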